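/- arXiv:1604.02516 — 4 statements merged into one kernel-verified Lean document; each statement's English description precedes it below -/
import Mathlib

section
/- For p, q ∈ ℝ³ with p₀ = √(1+|p|²), q₀ = √(1+|q|²) and g² = 2(p₀q₀ − p·q − 1), one has the lower bound g ≥ √(|p×q|² + |p−q|²) / √(p₀q₀). -/
open scoped RealInnerProductSpace

noncomputable section

/-- Relativistic energy `p₀ = √(1+|p|²)`. -/
def en (p : EuclideanSpace ℝ (Fin 3)) : ℝ := Real.sqrt (1 + ‖p‖ ^ 2)

/-- Relative momentum `g ≥ 0` with `g² = 2(p₀q₀ − p·q − 1)`. -/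
def relg (p q : EuclideanSpace ℝ (Fin 3)) : ℝ :=
  Real.sqrt (2 * (en p * en q - ⟪p, q⟫ - 1))

/-- Euclidean norm of the cross product `|p × q|`. -/
def crossNorm (p q : EuclideanSpace ℝ (Fin 3)) : ℝ :=
  ‖(WithLp.equiv 2 (Fin 3 → ℝ)).symm
      (crossProduct (WithLp.equiv 2 (Fin 3 → ℝ) p) (WithLp.equiv 2 (Fin 3 → ℝ) q))‖

lemma cross_sq (p q : EuclideanSpace ℝ (Fin 3)) :
    crossNorm p q ^ 2 = ‖p‖ ^ 2 * ‖q‖ ^ 2 - ⟪p, q⟫ ^ 2 := by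
  have h : ∀ x : EuclideanSpace ℝ (Fin 3), ‖x‖ ^ 2 = x 0 ^ 2 + x 1 ^ 2 + x 2 ^ 2 := by
    intro x
    rw [← real_inner_self_eq_norm_sq]
    simp only [PiLp.inner_apply, Fin.sum_univ_three, RCLike.inner_apply, conj_trivial]
    ring
  rw [show (⟪p, q⟫ : ℝ) = p 0 * q 0 + p 1 * q 1 + p 2 * q 2 by
    simp [PiLp.inner_apply, Fin.sum_univ_three]; ring]
  unfold crossNorm
  rw [h, h, h]
  simp [crossProduct]
  ring

theorem relg_lower_bound (p q : EuclideanSpace ℝ (Fin 3)) :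
    Real.sqrt (crossNorm p q ^ 2 + ‖p - q‖ ^ 2) / Real.sqrt (en p * en q) ≤ relg p q := by
  set a := en p * en q with ha
  set c := (⟪p, q⟫ : ℝ) + 1 with hc
  have hp1 : (1:ℝ) ≤ en p := by
    unfold en
    have := Real.sqrt_le_sqrt (show (1:ℝ) ≤ 1 + ‖p‖ ^ 2 by nlinarith [sq_nonneg ‖p‖])
    simp at this; simpa using this
  have hq1 : (1:ℝ) ≤ en q := by
    unfold en
    have := Real.sqrt_le_sqrt (show (1:ℝ) ≤ 1 + ‖q‖ ^ 2 by nlinarith [sq_nonneg ‖q‖])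
    simp at this; simpa using this
  have ha1 : (1:ℝ) ≤ a := by nlinarith
  have ha0 : (0:ℝ) < a := by linarith
  have hasq : a ^ 2 = (1 + ‖p‖ ^ 2) * (1 + ‖q‖ ^ 2) := by
    have := Real.sq_sqrt (show (0:ℝ) ≤ 1 + ‖p‖ ^ 2 by positivity)
    have := Real.sq_sqrt (show (0:ℝ) ≤ 1 + ‖q‖ ^ 2 by positivity)
    rw [ha]; unfold en; nlinarith
  have hX : crossNorm p q ^ 2 + ‖p - q‖ ^ 2 = a ^ 2 - c ^ 2 := by
    rw [cross_sq, hasq, hc, @norm_sub_sq_real]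
    ring
  have hXnn : (0:ℝ) ≤ crossNorm p q ^ 2 + ‖p - q‖ ^ 2 := by positivity
  have hac : c ≤ a := by nlinarith [hX, hXnn]
  rw [← Real.sqrt_div hXnn]
  unfold relg
  apply Real.sqrt_le_sqrt
  rw [div_le_iff₀ ha0, hX]
  nlinarith [sq_nonneg (a - c)]
end
end

section
/- Let 0 ≤ α₁ < 3, α₂ ≥ 0, and β > 3 + α₁ + α₂. Then there exists C > 0 such that for all p ∈ ℝ³, ∫_{ℝ³} (1+|q|)^{−β} / (|p−q|^{α₁} (1+|p−q|)^{α₂}) dq ≤ C (1+|p|)^{−α₁−α₂}. -/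
open MeasureTheory Real Metric Set

noncomputable section

lemma aux_integrableOn_ball {α : ℝ} (h0 : 0 ≤ α) (h3 : α < 3) :
    IntegrableOn (fun q : EuclideanSpace ℝ (Fin 3) => ‖q‖ ^ (-α)) (ball 0 1) := by
  rcases eq_or_lt_of_le h0 with h | hpos
  · simp only [← h, neg_zero, rpow_zero]
    exact integrableOn_const measure_ball_lt_top.ne
  have hmeas : Measurable fun q : EuclideanSpace ℝ (Fin 3) => ‖q‖ ^ (-α) := by fun_prop
  constructor
  · exact hmeas.aestronglyMeasurable
  · rw [hasFiniteIntegral_iff_ofReal (Filter.Eventually.of_forall fun q => rpow_nonneg (norm_nonneg q) _)]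
    set μ := volume.restrict (ball (0 : EuclideanSpace ℝ (Fin 3)) 1) with hμ
    rw [lintegral_eq_lintegral_meas_le μ
      (Filter.Eventually.of_forall fun q => rpow_nonneg (norm_nonneg q) _) hmeas.aemeasurable]
    have hsub : ∀ t : ℝ, 0 < t →
        {a : EuclideanSpace ℝ (Fin 3) | t ≤ ‖a‖ ^ (-α)} ⊆ closedBall 0 (t ^ (-α)⁻¹) := by
      intro t ht a ha
      simp only [mem_setOf_eq] at ha
      simp only [mem_closedBall_zero_iff]
      rcases eq_or_lt_of_le (norm_nonneg a) with hz | hz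
      · rw [← hz]; positivity
      · exact (Real.le_rpow_inv_iff_of_neg hz ht (by linarith)).2 ha
    have hbound : ∀ t : ℝ, t ∈ Ioi (1:ℝ) →
        μ {a : EuclideanSpace ℝ (Fin 3) | t ≤ ‖a‖ ^ (-α)} ≤
          ENNReal.ofReal (t ^ ((-α)⁻¹ * 3)) * volume (ball (0 : EuclideanSpace ℝ (Fin 3)) 1) := by
      intro t ht
      have ht0 : (0:ℝ) < t := lt_trans one_pos ht
      calc μ {a : EuclideanSpace ℝ (Fin 3) | t ≤ ‖a‖ ^ (-α)}
          ≤ volume {a : EuclideanSpace ℝ (Fin 3) | t ≤ ‖a‖ ^ (-α)} :=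
            Measure.restrict_le_self _
        _ ≤ volume (closedBall (0 : EuclideanSpace ℝ (Fin 3)) (t ^ (-α)⁻¹)) :=
            measure_mono (hsub t ht0)
        _ = ENNReal.ofReal ((t ^ (-α)⁻¹) ^ Module.finrank ℝ (EuclideanSpace ℝ (Fin 3))) *
              volume (ball (0 : EuclideanSpace ℝ (Fin 3)) 1) :=
            Measure.addHaar_closedBall _ _ (by positivity)
        _ = ENNReal.ofReal (t ^ ((-α)⁻¹ * 3)) * volume (ball (0 : EuclideanSpace ℝ (Fin 3)) 1) := by
            rw [finrank_euclideanSpace_fin, ← rpow_natCast (t ^ (-α)⁻¹) 3,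
              ← rpow_mul ht0.le]
            norm_num
    calc ∫⁻ t in Ioi (0:ℝ), μ {a : EuclideanSpace ℝ (Fin 3) | t ≤ ‖a‖ ^ (-α)}
        ≤ ∫⁻ t in Ioc (0:ℝ) 1 ∪ Ioi 1, μ {a : EuclideanSpace ℝ (Fin 3) | t ≤ ‖a‖ ^ (-α)} :=
          lintegral_mono_set Ioi_subset_Ioc_union_Ioi
      _ ≤ (∫⁻ t in Ioc (0:ℝ) 1, μ {a : EuclideanSpace ℝ (Fin 3) | t ≤ ‖a‖ ^ (-α)}) +
            ∫⁻ t in Ioi (1:ℝ), μ {a : EuclideanSpace ℝ (Fin 3) | t ≤ ‖a‖ ^ (-α)} :=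
          lintegral_union_le _ _ _
      _ < ⊤ := by
          refine ENNReal.add_lt_top.2 ⟨?_, ?_⟩
          · calc (∫⁻ t in Ioc (0:ℝ) 1, μ {a : EuclideanSpace ℝ (Fin 3) | t ≤ ‖a‖ ^ (-α)})
                ≤ ∫⁻ _ in Ioc (0:ℝ) 1, volume (ball (0 : EuclideanSpace ℝ (Fin 3)) 1) := by
                  refine setLIntegral_mono' measurableSet_Ioc fun t _ => ?_
                  calc μ _ ≤ μ univ := measure_mono (subset_univ _)
                    _ = volume (ball (0 : EuclideanSpace ℝ (Fin 3)) 1) := by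
                        rw [hμ, Measure.restrict_apply_univ]
              _ < ⊤ := by
                  rw [setLIntegral_const]
                  exact ENNReal.mul_lt_top measure_ball_lt_top (by simp)
          · calc (∫⁻ t in Ioi (1:ℝ), μ {a : EuclideanSpace ℝ (Fin 3) | t ≤ ‖a‖ ^ (-α)})
                ≤ ∫⁻ t in Ioi (1:ℝ), ENNReal.ofReal (t ^ ((-α)⁻¹ * 3)) *
                    volume (ball (0 : EuclideanSpace ℝ (Fin 3)) 1) :=
                  setLIntegral_mono' measurableSet_Ioi hbound
              _ = (∫⁻ t in Ioi (1:ℝ), ENNReal.ofReal (t ^ ((-α)⁻¹ * 3))) *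
                    volume (ball (0 : EuclideanSpace ℝ (Fin 3)) 1) :=
                  lintegral_mul_const' _ _ measure_ball_lt_top.ne
              _ < ⊤ := by
                  refine ENNReal.mul_lt_top ?_ measure_ball_lt_top
                  have hc : (-α)⁻¹ * 3 < -1 := by
                    rw [← neg_inv]
                    have : (1:ℝ) < 3 / α := (one_lt_div hpos).2 h3
                    have hinv : α⁻¹ * 3 = 3 / α := by field_simp
                    nlinarith
                  exact (integrableOn_Ioi_rpow_of_lt hc one_pos).setLIntegral_lt_top

theorem singular_kernel_integral_bound (α₁ α₂ β : ℝ)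
    (h1 : 0 ≤ α₁) (h2 : α₁ < 3) (h3 : 0 ≤ α₂) (h4 : 3 + α₁ + α₂ < β) :
    ∃ C > 0, ∀ p : EuclideanSpace ℝ (Fin 3),
      (∫ q : EuclideanSpace ℝ (Fin 3),
          (1 + ‖q‖) ^ (-β) / (‖p - q‖ ^ α₁ * (1 + ‖p - q‖) ^ α₂))
        ≤ C * (1 + ‖p‖) ^ (-α₁ - α₂) := by
  classical
  set γ : ℝ := β - α₁ - α₂ with hγdef
  have hγ : 3 < γ := by simp only [hγdef]; linarith
  set F : EuclideanSpace ℝ (Fin 3) → ℝ :=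
    (ball (0 : EuclideanSpace ℝ (Fin 3)) 1).indicator (fun x => ‖x‖ ^ (-α₁)) with hFdef
  have hF : Integrable F := by
    rw [hFdef, integrable_indicator_iff measurableSet_ball]
    exact aux_integrableOn_ball h1 h2
  have hI : Integrable (fun x : EuclideanSpace ℝ (Fin 3) => (1 + ‖x‖) ^ (-γ)) := by
    apply integrable_one_add_norm
    rw [finrank_euclideanSpace_fin]
    exact_mod_cast hγ
  set K₀ : ℝ := ∫ x, F x with hK₀def
  set I : ℝ := ∫ x : EuclideanSpace ℝ (Fin 3), (1 + ‖x‖) ^ (-γ) with hIdef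
  have hK₀ : 0 ≤ K₀ := integral_nonneg fun x => indicator_nonneg
    (fun y _ => rpow_nonneg (norm_nonneg y) _) x
  have hInn : 0 ≤ I := integral_nonneg fun x => rpow_nonneg (by positivity) _
  have h2β : (0:ℝ) < 2 ^ β := rpow_pos_of_pos two_pos _
  have h2α : (0:ℝ) < 2 ^ α₁ := rpow_pos_of_pos two_pos _
  refine ⟨2 ^ β * K₀ + 2 ^ α₁ * I + 1, by positivity, fun p => ?_⟩
  set X : ℝ := (1 + ‖p‖) ^ (-α₁ - α₂) with hXdef
  have hXpos : 0 < X := rpow_pos_of_pos (by positivity) _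
  set g : EuclideanSpace ℝ (Fin 3) → ℝ :=
    fun q => X * (2 ^ β * F (q - p) + 2 ^ α₁ * (1 + ‖q‖) ^ (-γ)) with hgdef
  have hg : Integrable g :=
    (((hF.comp_sub_right p).const_mul _).add (hI.const_mul _)).const_mul _
  have hmain : ∫ q : EuclideanSpace ℝ (Fin 3),
      (1 + ‖q‖) ^ (-β) / (‖p - q‖ ^ α₁ * (1 + ‖p - q‖) ^ α₂) ≤ ∫ q, g q := by
    apply integral_mono_of_nonneg
    · exact Filter.Eventually.of_forall fun q => by positivity
    · exact hg
    · have hae : ∀ᵐ q : EuclideanSpace ℝ (Fin 3), q ≠ p := by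
        rw [ae_iff]
        simp [measure_singleton p]
      filter_upwards [hae] with q hq
      have hr : 0 < ‖p - q‖ := by
        rw [norm_pos_iff, sub_ne_zero]
        exact fun h => hq h.symm
      have hq1 : 0 < 1 + ‖q‖ := by positivity
      have hp1 : 0 < 1 + ‖p‖ := by positivity
      have hpr : 0 < 1 + ‖p - q‖ := by positivity
      have hnormp : ‖p‖ ≤ ‖q‖ + ‖p - q‖ := by
        calc ‖p‖ = ‖q + (p - q)‖ := by rw [add_sub_cancel]
          _ ≤ ‖q‖ + ‖p - q‖ := norm_add_le _ _
      by_cases hcase : ‖p - q‖ < 1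
      · -- near singularity
        have hmem : q - p ∈ ball (0 : EuclideanSpace ℝ (Fin 3)) 1 := by
          rw [mem_ball_zero_iff, norm_sub_rev]
          exact hcase
        have hFval : F (q - p) = ‖p - q‖ ^ (-α₁) := by
          rw [hFdef, indicator_of_mem hmem, norm_sub_rev]
        have step1 : (1 + ‖q‖) ^ (-β) / (‖p - q‖ ^ α₁ * (1 + ‖p - q‖) ^ α₂)
            ≤ (1 + ‖q‖) ^ (-β) / ‖p - q‖ ^ α₁ := by
          apply div_le_div_of_nonneg_left (by positivity) (by positivity)
          calc ‖p - q‖ ^ α₁ = ‖p - q‖ ^ α₁ * 1 := (mul_one _).symm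
            _ ≤ ‖p - q‖ ^ α₁ * (1 + ‖p - q‖) ^ α₂ := by
                gcongr
                exact Real.one_le_rpow (by linarith) h3
        have step2 : (1 + ‖q‖) ^ (-β) ≤ 2 ^ β * (1 + ‖p‖) ^ (-β) := by
          have hle : (1 + ‖p‖) / 2 ≤ 1 + ‖q‖ := by
            have : 0 ≤ ‖q‖ := norm_nonneg q
            linarith
          calc (1 + ‖q‖) ^ (-β) ≤ ((1 + ‖p‖) / 2) ^ (-β) :=
              rpow_le_rpow_of_nonpos (by positivity) hle (by linarith)
            _ = (1 + ‖p‖) ^ (-β) / 2 ^ (-β) := by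
                rw [Real.div_rpow hp1.le (by norm_num : (0:ℝ) ≤ 2)]
            _ = 2 ^ β * (1 + ‖p‖) ^ (-β) := by
                rw [Real.rpow_neg (by norm_num : (0:ℝ) ≤ 2), div_eq_mul_inv, inv_inv]
                ring
        have step3 : (1 + ‖p‖) ^ (-β) ≤ X := by
          rw [hXdef]
          exact rpow_le_rpow_of_exponent_le (by linarith [norm_nonneg p]) (by linarith)
        have step23 : (1 + ‖q‖) ^ (-β) ≤ 2 ^ β * X := by nlinarith
        calc (1 + ‖q‖) ^ (-β) / (‖p - q‖ ^ α₁ * (1 + ‖p - q‖) ^ α₂)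
            ≤ (1 + ‖q‖) ^ (-β) / ‖p - q‖ ^ α₁ := step1
          _ = (1 + ‖q‖) ^ (-β) * ‖p - q‖ ^ (-α₁) := by
              rw [Real.rpow_neg hr.le, div_eq_mul_inv]
          _ ≤ (2 ^ β * X) * ‖p - q‖ ^ (-α₁) :=
              mul_le_mul_of_nonneg_right step23 (rpow_nonneg hr.le _)
          _ ≤ g q := by
              rw [hgdef]
              simp only [hFval]
              nlinarith [rpow_nonneg hr.le (-α₁), rpow_nonneg hq1.le (-γ),
                mul_nonneg hXpos.le (mul_nonneg h2α.le (rpow_nonneg hq1.le (-γ)))]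
      · -- far from singularity
        push_neg at hcase
        have hFval : F (q - p) = 0 := by
          rw [hFdef, indicator_of_notMem]
          rw [mem_ball_zero_iff, norm_sub_rev]
          exact not_lt.2 hcase
        set s : ℝ := α₁ + α₂ with hsdef
        have hpeetre : 1 + ‖p‖ ≤ (1 + ‖q‖) * (1 + ‖p - q‖) := by
          nlinarith [norm_nonneg q, norm_nonneg (p - q),
            mul_nonneg (norm_nonneg q) (norm_nonneg (p - q))]
        have hdenom : (1 + ‖p - q‖) ^ s / 2 ^ α₁ ≤ ‖p - q‖ ^ α₁ * (1 + ‖p - q‖) ^ α₂ := by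
          have hhalf : (1 + ‖p - q‖) / 2 ≤ ‖p - q‖ := by linarith
          calc (1 + ‖p - q‖) ^ s / 2 ^ α₁
              = (1 + ‖p - q‖) ^ α₁ / 2 ^ α₁ * (1 + ‖p - q‖) ^ α₂ := by
                rw [hsdef, Real.rpow_add hpr]
                ring
            _ ≤ ‖p - q‖ ^ α₁ * (1 + ‖p - q‖) ^ α₂ := by
                gcongr
                rw [← Real.div_rpow hpr.le (by norm_num : (0:ℝ) ≤ 2)]
                exact rpow_le_rpow (by positivity) hhalf h1
        have hstep : (1 + ‖q‖) ^ (-β) / (‖p - q‖ ^ α₁ * (1 + ‖p - q‖) ^ α₂)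
            ≤ (1 + ‖q‖) ^ (-β) * 2 ^ α₁ * (1 + ‖p - q‖) ^ (-s) := by
          calc (1 + ‖q‖) ^ (-β) / (‖p - q‖ ^ α₁ * (1 + ‖p - q‖) ^ α₂)
              ≤ (1 + ‖q‖) ^ (-β) / ((1 + ‖p - q‖) ^ s / 2 ^ α₁) :=
                div_le_div_of_nonneg_left (by positivity) (by positivity) hdenom
            _ = (1 + ‖q‖) ^ (-β) * 2 ^ α₁ * (1 + ‖p - q‖) ^ (-s) := by
                rw [Real.rpow_neg hpr.le]
                field_simp
        have hpe2 : (1 + ‖p - q‖) ^ (-s) ≤ (1 + ‖q‖) ^ s * (1 + ‖p‖) ^ (-s) := by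
          have hs0 : 0 ≤ s := by rw [hsdef]; linarith
          have ha : (0:ℝ) < (1 + ‖p‖) ^ s := rpow_pos_of_pos hp1 _
          have hb : (0:ℝ) < (1 + ‖p - q‖) ^ s := rpow_pos_of_pos hpr _
          have hA : (1 + ‖p‖) ^ s ≤ (1 + ‖q‖) ^ s * (1 + ‖p - q‖) ^ s := by
            rw [← Real.mul_rpow hq1.le hpr.le]
            exact rpow_le_rpow hp1.le hpeetre hs0
          rw [Real.rpow_neg hpr.le, Real.rpow_neg hp1.le, inv_eq_one_div, ← div_eq_mul_inv,
            div_le_div_iff₀ hb ha]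
          linarith
        have hexp1 : -β + s = -γ := by rw [hsdef, hγdef]; ring
        have hexp2 : -s = -α₁ - α₂ := by rw [hsdef]; ring
        calc (1 + ‖q‖) ^ (-β) / (‖p - q‖ ^ α₁ * (1 + ‖p - q‖) ^ α₂)
            ≤ (1 + ‖q‖) ^ (-β) * 2 ^ α₁ * (1 + ‖p - q‖) ^ (-s) := hstep
          _ ≤ (1 + ‖q‖) ^ (-β) * 2 ^ α₁ * ((1 + ‖q‖) ^ s * (1 + ‖p‖) ^ (-s)) :=
              mul_le_mul_of_nonneg_left hpe2 (by positivity)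
          _ = 2 ^ α₁ * ((1 + ‖q‖) ^ (-β) * (1 + ‖q‖) ^ s) * (1 + ‖p‖) ^ (-s) := by ring
          _ = X * (2 ^ α₁ * (1 + ‖q‖) ^ (-γ)) := by
              rw [← Real.rpow_add hq1, hexp1, hexp2, hXdef]
              ring
          _ ≤ g q := by
              rw [hgdef]
              simp only [hFval, mul_zero, zero_add]
              exact le_refl _
  have hgval : ∫ q, g q = X * (2 ^ β * K₀ + 2 ^ α₁ * I) := by
    rw [hgdef, integral_const_mul]
    congr 1
    rw [integral_add ((hF.comp_sub_right p).const_mul _) (hI.const_mul _),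
      integral_const_mul, integral_const_mul, integral_sub_right_eq_self F p]
  refine hmain.trans ?_
  rw [hgval]
  nlinarith
end
end

section
/- Let J(p) = (1/(4π)) e^{−p₀} with p₀ = √(1+|p|²) be the normalized relativistic Maxwellian (Jüttner distribution). Let Ω be a measure space and F : Ω × ℝ³ → [0,∞) be measurable with F log F − J log J, F − J, and p₀(F−J) integrable. Suppose ∫∫ (F − J) dp dx = M₀, ∫∫ p₀ (F − J) dp dx = E₀, and ∫∫ (F log F − J log J) dp dx ≤ H₀. Then ∫∫_{ {|F−J| < J} } |F−J|²/(4J) dp dx + ∫∫_{ {|F−J| ≥ J} } (1/4)|F−J| dp dx ≤ H₀ + (log(4π) − 1) M₀ + E₀. -/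
open MeasureTheory

noncomputable section

/-- Normalized relativistic Maxwellian (Jüttner distribution) `J(p) = (1/(4π)) e^{−p₀}`. -/
def Jutt (p : EuclideanSpace ℝ (Fin 3)) : ℝ := (1 / (4 * Real.pi)) * Real.exp (-en p)

lemma Jutt_pos (p : EuclideanSpace ℝ (Fin 3)) : 0 < Jutt p := by
  unfold Jutt
  positivity

lemma log_Jutt (p : EuclideanSpace ℝ (Fin 3)) :
    Real.log (Jutt p) = -Real.log (4 * Real.pi) - en p := by
  unfold Jutt
  rw [Real.log_mul (by positivity) (Real.exp_ne_zero _), Real.log_exp, one_div,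
    Real.log_inv]
  ring

lemma continuous_en : Continuous en := by
  unfold en
  fun_prop

lemma continuous_Jutt : Continuous Jutt :=
  continuous_const.mul (Real.continuous_exp.comp continuous_en.neg)

/-- `t log t - t + 1 ≥ (t-1)²/4` on `(0, 2]`. -/
lemma calc1 {t : ℝ} (ht : 0 < t) (ht2 : t ≤ 2) :
    (t - 1) ^ 2 / 4 ≤ t * Real.log t - t + 1 := by
  set q : ℝ → ℝ := fun t => t * Real.log t - t + 1 - (t - 1) ^ 2 / 4 with hq
  have hderiv : ∀ x : ℝ, 0 < x → HasDerivAt q (Real.log x - (x - 1) / 2) x := by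
    intro x hx
    have h1 : HasDerivAt (fun t : ℝ => t * Real.log t) (1 * Real.log x + x * x⁻¹) x :=
      (hasDerivAt_id x).mul (Real.hasDerivAt_log hx.ne')
    have h2 : HasDerivAt (fun t : ℝ => (t - 1) ^ 2 / 4) (2 * (x - 1) ^ 1 * 1 / 4) x := by
      exact (((hasDerivAt_id x).sub_const 1).pow 2).div_const 4
    have := ((h1.sub (hasDerivAt_id x)).add_const 1).sub h2
    convert this using 1
    · rfl
    · rfl
    · rfl
    · rw [mul_inv_cancel₀ hx.ne']
      ring
  have hcont : ∀ s : Set ℝ, s ⊆ Set.Ioi 0 → ContinuousOn q s := by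
    intro s hs
    apply ContinuousOn.sub
    · apply ContinuousOn.add
      · apply ContinuousOn.sub
        · exact continuousOn_id.mul (Real.continuousOn_log.mono (fun x hx => by
            exact ne_of_gt (hs hx)))
        · exact continuousOn_id
      · exact continuousOn_const
    · fun_prop
  have hq1 : q 1 = 0 := by simp [hq]
  rcases le_total t 1 with h1 | h1
  · -- antitone on Ioc 0 1
    have hanti : AntitoneOn q (Set.Ioc 0 1) := by
      apply antitoneOn_of_hasDerivWithinAt_nonpos (convex_Ioc 0 1)
        (hcont _ (fun x hx => hx.1)) (f' := fun x => Real.log x - (x - 1) / 2)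
      · intro x hx
        rw [interior_Ioc] at hx
        exact (hderiv x hx.1).hasDerivWithinAt
      · intro x hx
        rw [interior_Ioc] at hx
        have hx0 : (0 : ℝ) < x := hx.1
        have h3 : Real.log x ≤ (x - 1) / 2 := by
          have := Real.one_sub_inv_le_log_of_pos (x := x⁻¹) (by positivity)
          rw [Real.log_inv, inv_inv] at this
          nlinarith [hx.2.le]
        linarith
    have := hanti (Set.mem_Ioc.2 ⟨ht, h1⟩) (Set.mem_Ioc.2 ⟨one_pos, le_refl 1⟩) h1
    rw [hq1] at this
    simpa [hq] using this
  · -- monotone on Icc 1 2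
    have hmono : MonotoneOn q (Set.Icc 1 2) := by
      apply monotoneOn_of_hasDerivWithinAt_nonneg (convex_Icc 1 2)
        (hcont _ (fun x hx => lt_of_lt_of_le one_pos hx.1)) (f' := fun x => Real.log x - (x - 1) / 2)
      · intro x hx
        rw [interior_Icc] at hx
        exact (hderiv x (lt_trans one_pos hx.1)).hasDerivWithinAt
      · intro x hx
        rw [interior_Icc] at hx
        have hx1 : (1 : ℝ) < x := hx.1
        have h3 : (x - 1) / 2 ≤ Real.log x := by
          have := Real.one_sub_inv_le_log_of_pos (x := x) (by linarith)
          have hxi : x⁻¹ ≤ 1 := by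
            rw [inv_le_one_iff₀]; right; linarith
          have h4 : (x - 1) / x ≤ Real.log x := by
            rw [sub_div, div_self (by linarith : x ≠ 0), one_div]
            exact this
          refine le_trans ?_ h4
          rw [div_le_div_iff₀ (by norm_num) (by linarith)]
          nlinarith [hx.2]
        linarith
    have := hmono (Set.mem_Icc.2 ⟨le_refl 1, by norm_num⟩) (Set.mem_Icc.2 ⟨h1, ht2⟩) h1
    rw [hq1] at this
    simpa [hq] using this

/-- `t log t - t + 1 ≥ (t-1)/4` for `t ≥ 2`. -/
lemma calc2 {t : ℝ} (ht : 2 ≤ t) :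
    (t - 1) / 4 ≤ t * Real.log t - t + 1 := by
  set r : ℝ → ℝ := fun t => t * Real.log t - t + 1 - (t - 1) / 4 with hr
  have hderiv : ∀ x : ℝ, 0 < x → HasDerivAt r (Real.log x - 1 / 4) x := by
    intro x hx
    have h1 : HasDerivAt (fun t : ℝ => t * Real.log t) (1 * Real.log x + x * x⁻¹) x :=
      (hasDerivAt_id x).mul (Real.hasDerivAt_log hx.ne')
    have h2 : HasDerivAt (fun t : ℝ => (t - 1) / 4) (1 / 4) x := by
      exact ((hasDerivAt_id x).sub_const 1).div_const 4
    have := ((h1.sub (hasDerivAt_id x)).add_const 1).sub h2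
    convert this using 1
    · rfl
    · rfl
    · rfl
    · rw [mul_inv_cancel₀ hx.ne']
      ring
  have hmono : MonotoneOn r (Set.Ici 2) := by
    apply monotoneOn_of_hasDerivWithinAt_nonneg (convex_Ici 2)
      (f' := fun x => Real.log x - 1 / 4)
    · apply ContinuousOn.sub
      · apply ContinuousOn.add
        · exact (continuousOn_id.mul (Real.continuousOn_log.mono (fun x hx => by
            have : (2:ℝ) ≤ x := hx
            exact ne_of_gt (by linarith)))).sub continuousOn_id
        · exact continuousOn_const
      · fun_prop
    · intro x hx
      rw [interior_Ici] at hx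
      exact (hderiv x (lt_trans (by norm_num) hx)).hasDerivWithinAt
    · intro x hx
      rw [interior_Ici] at hx
      have h2 : Real.log 2 ≤ Real.log x := Real.log_le_log (by norm_num) hx.le
      have := Real.log_two_gt_d9
      linarith
  have hr2 : 0 ≤ r 2 := by
    have := Real.log_two_gt_d9
    simp only [hr]
    nlinarith
  have := hmono (Set.mem_Ici.2 (le_refl 2)) (Set.mem_Ici.2 ht) ht
  have h := le_trans hr2 this
  simpa [hr] using h

/-- Key pointwise inequality. -/
lemma key_ineq (a b : ℝ) (ha : 0 ≤ a) (hb : 0 < b) :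
    (if |a - b| < b then |a - b| ^ 2 / (4 * b) else (1 / 4) * |a - b|)
      ≤ a * Real.log a - b * Real.log b - (1 + Real.log b) * (a - b) := by
  rcases eq_or_lt_of_le ha with ha0 | ha0
  · -- a = 0
    subst ha0
    have habs : |(0:ℝ) - b| = b := by rw [zero_sub, abs_neg, abs_of_pos hb]
    rw [if_neg (by rw [habs]; exact lt_irrefl b), habs, Real.log_zero]
    nlinarith
  · -- a > 0, write RHS as b * (t log t - t + 1) with t = a / b
    set t := a / b with htdef
    have ht0 : 0 < t := div_pos ha0 hb
    have hat : a = b * t := by rw [htdef]; field_simp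
    have hRHS : a * Real.log a - b * Real.log b - (1 + Real.log b) * (a - b)
        = b * (t * Real.log t - t + 1) := by
      have hlog : Real.log a = Real.log t + Real.log b := by
        rw [hat, mul_comm, Real.log_mul (ne_of_gt ht0) (ne_of_gt hb)]
      rw [hlog, hat]
      ring
    rw [hRHS]
    by_cases hc : |a - b| < b
    · rw [if_pos hc]
      have ht2 : t ≤ 2 := by
        rw [abs_lt] at hc
        rw [htdef, div_le_iff₀ hb]
        linarith [hc.2]
      have heq : |a - b| ^ 2 / (4 * b) = b * ((t - 1) ^ 2 / 4) := by
        rw [sq_abs, hat]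
        field_simp
      rw [heq]
      exact mul_le_mul_of_nonneg_left (calc1 ht0 ht2) hb.le
    · rw [if_neg hc]
      push_neg at hc
      have h2t : 2 ≤ t := by
        rcases le_abs.mp hc with h | h
        · rw [htdef, le_div_iff₀ hb]; linarith
        · exfalso; linarith
      have hab : b ≤ a - b := by
        rw [hat]; nlinarith
      have habs : |a - b| = a - b := abs_of_nonneg (by linarith)
      rw [habs, hat]
      have hk := calc2 h2t
      have := mul_le_mul_of_nonneg_left hk hb.le
      nlinarith

theorem entropy_defect_bound {Ω : Type*} [MeasurableSpace Ω] (μ : Measure Ω)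
    (F : Ω × EuclideanSpace ℝ (Fin 3) → ℝ) (hF : Measurable F) (hFpos : ∀ z, 0 ≤ F z)
    (M₀ E₀ H₀ : ℝ)
    (hInt1 : Integrable
      (fun z => F z * Real.log (F z) - Jutt z.2 * Real.log (Jutt z.2)) (μ.prod volume))
    (hInt2 : Integrable (fun z => F z - Jutt z.2) (μ.prod volume))
    (hInt3 : Integrable (fun z => en z.2 * (F z - Jutt z.2)) (μ.prod volume))
    (hM : ∫ z, (F z - Jutt z.2) ∂(μ.prod volume) = M₀)
    (hE : ∫ z, en z.2 * (F z - Jutt z.2) ∂(μ.prod volume) = E₀)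
    (hH : (∫ z, (F z * Real.log (F z) - Jutt z.2 * Real.log (Jutt z.2)) ∂(μ.prod volume)) ≤ H₀) :
    (∫ z in {z : Ω × EuclideanSpace ℝ (Fin 3) | |F z - Jutt z.2| < Jutt z.2},
        |F z - Jutt z.2| ^ 2 / (4 * Jutt z.2) ∂(μ.prod volume))
      + (∫ z in {z : Ω × EuclideanSpace ℝ (Fin 3) | Jutt z.2 ≤ |F z - Jutt z.2|},
          (1 / 4) * |F z - Jutt z.2| ∂(μ.prod volume))
      ≤ H₀ + (Real.log (4 * Real.pi) - 1) * M₀ + E₀ := by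
  set ν : Measure (Ω × EuclideanSpace ℝ (Fin 3)) := μ.prod volume with hν
  have hJm : Measurable (fun z : Ω × EuclideanSpace ℝ (Fin 3) => Jutt z.2) :=
    continuous_Jutt.measurable.comp measurable_snd
  set s : Set (Ω × EuclideanSpace ℝ (Fin 3)) := {z | |F z - Jutt z.2| < Jutt z.2} with hs
  have hsm : MeasurableSet s := by
    apply measurableSet_lt
    · exact (hF.sub hJm).abs
    · exact hJm
  -- the defect function g
  set g : Ω × EuclideanSpace ℝ (Fin 3) → ℝ := fun z =>
    F z * Real.log (F z) - Jutt z.2 * Real.log (Jutt z.2)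
      - (1 + Real.log (Jutt z.2)) * (F z - Jutt z.2) with hgdef
  have hgeq : g = fun z =>
      (F z * Real.log (F z) - Jutt z.2 * Real.log (Jutt z.2))
        - ((1 - Real.log (4 * Real.pi)) * (F z - Jutt z.2)
            - en z.2 * (F z - Jutt z.2)) := by
    funext z
    simp only [hgdef, log_Jutt]
    ring
  have hI4 : Integrable (fun z : Ω × EuclideanSpace ℝ (Fin 3) =>
      (1 - Real.log (4 * Real.pi)) * (F z - Jutt z.2) - en z.2 * (F z - Jutt z.2)) ν :=
    (hInt2.const_mul _).sub hInt3
  have hg : Integrable g ν := by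
    rw [hgeq]
    exact hInt1.sub hI4
  have hgint : ∫ z, g z ∂ν ≤ H₀ + (Real.log (4 * Real.pi) - 1) * M₀ + E₀ := by
    have e1 : ∫ z, g z ∂ν
        = (∫ z, (F z * Real.log (F z) - Jutt z.2 * Real.log (Jutt z.2)) ∂ν)
          - ∫ z, ((1 - Real.log (4 * Real.pi)) * (F z - Jutt z.2)
              - en z.2 * (F z - Jutt z.2)) ∂ν := by
      rw [hgeq]
      exact integral_sub hInt1 hI4
    have e2 : (∫ z, ((1 - Real.log (4 * Real.pi)) * (F z - Jutt z.2)
          - en z.2 * (F z - Jutt z.2)) ∂ν)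
        = (1 - Real.log (4 * Real.pi)) * M₀ - E₀ := by
      rw [integral_sub (hInt2.const_mul _) hInt3, integral_const_mul, hM, hE]
    rw [e1, e2]
    linarith
  -- the lower bound function h
  set h : Ω × EuclideanSpace ℝ (Fin 3) → ℝ := fun z =>
    if |F z - Jutt z.2| < Jutt z.2 then |F z - Jutt z.2| ^ 2 / (4 * Jutt z.2)
    else (1 / 4) * |F z - Jutt z.2| with hhdef
  have hhm : Measurable h := by
    apply Measurable.ite hsm
    · exact ((hF.sub hJm).abs.pow_const 2).div (hJm.const_mul 4)
    · exact ((hF.sub hJm).abs).const_mul _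
  have hh_nonneg : ∀ z, 0 ≤ h z := by
    intro z
    simp only [hhdef]
    split
    · exact div_nonneg (pow_nonneg (abs_nonneg _) 2)
        (mul_nonneg (by norm_num) (Jutt_pos z.2).le)
    · exact mul_nonneg (by norm_num) (abs_nonneg _)
  have hhg : ∀ z, h z ≤ g z := by
    intro z
    simpa [hhdef, hgdef] using key_ineq (F z) (Jutt z.2) (hFpos z) (Jutt_pos z.2)
  have hh : Integrable h ν := by
    apply hg.mono' hhm.aestronglyMeasurable
    filter_upwards with z
    rw [Real.norm_of_nonneg (hh_nonneg z)]
    exact hhg z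
  have hsc : {z : Ω × EuclideanSpace ℝ (Fin 3) | Jutt z.2 ≤ |F z - Jutt z.2|} = sᶜ := by
    ext z
    simp [hs, not_lt]
  have h1 : (∫ z in s, |F z - Jutt z.2| ^ 2 / (4 * Jutt z.2) ∂ν) = ∫ z in s, h z ∂ν := by
    apply setIntegral_congr_fun hsm
    intro z hz
    have hz' : |F z - Jutt z.2| < Jutt z.2 := hz
    simp only [hhdef]
    rw [if_pos hz']
  have h2 : (∫ z in sᶜ, (1 / 4) * |F z - Jutt z.2| ∂ν) = ∫ z in sᶜ, h z ∂ν := by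
    apply setIntegral_congr_fun hsm.compl
    intro z hz
    have hz' : ¬ |F z - Jutt z.2| < Jutt z.2 := hz
    simp only [hhdef]
    rw [if_neg hz']
  rw [hsc, h1, h2, integral_add_compl hsm hh]
  calc ∫ z, h z ∂ν ≤ ∫ z, g z ∂ν := integral_mono hh hg hhg
  _ ≤ _ := hgint
end
end

section
/- Let p₀ = √(1+|p|²), q₀ = √(1+|q|²), g² = 2(p₀q₀ − p·q − 1), s = g² + 4, and for p+q ≠ 0, γ̃ = (p₀+q₀)/√s. For ω ∈ 𝕊², define p' = (p+q)/2 + (g/2)(ω + (γ̃−1)(p+q)((p+q)·ω)/|p+q|²) and q' = (p+q)/2 − (g/2)(ω + (γ̃−1)(p+q)((p+q)·ω)/|p+q|²), with energies p₀' = (p₀+q₀)/2 + (g/(2√s))(p+q)·ω and q₀' = (p₀+q₀)/2 − (g/(2√s))(p+q)·ω. Then p' + q' = p + q and p₀' + q₀' = p₀ + q₀, and moreover p₀' = √(1+|p'|²). -/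
open scoped RealInnerProductSpace

noncomputable section

private lemma key_alg (E g t n r : ℝ) (hn : n ≠ 0) (hr : 0 < r) (hr2 : r^2 = g^2+4)
    (hE : E^2 = g^2+4+n^2) :
    1 + (n^2/4 + 2*((1/2)*(g/2)*(t + (E/r-1)*t)) +
      (g/2)^2*(1 + 2*((E/r-1)*t/n^2)*t + ((E/r-1)*t/n^2)^2*n^2)) =
    (E/2 + g/(2*r)*t)^2 := by
  have hr0 : r ≠ 0 := hr.ne'
  have hE' : E^2 = r^2 + n^2 := by linarith
  field_simp
  linear_combination (4*g^2*t^2 - 4*n^2*r^2)*hE' - 4*n^2*r^2*hr2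

private lemma key_pos (E g t n r : ℝ) (hg : 0 ≤ g) (hE : 2 ≤ E) (hr : 0 < r)
    (hr2 : r^2 = g^2+4) (hE2 : E^2 = g^2+4+n^2) (ht : |t| ≤ n) :
    0 ≤ E/2 + g/(2*r)*t := by
  have hnmn : 0 ≤ n := le_trans (abs_nonneg t) ht
  have hEnn : (0:ℝ) ≤ E := by linarith
  have h1 : (g * n) ^ 2 ≤ (E * r) ^ 2 := by
    have : (E * r) ^ 2 = (g ^ 2 + 4 + n ^ 2) * (g ^ 2 + 4) := by rw [mul_pow, hE2, hr2]
    rw [this]; nlinarith [sq_nonneg (g ^ 2), sq_nonneg g, sq_nonneg n]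
  have hErgn : g * n ≤ E * r := by
    nlinarith [h1, mul_nonneg hg hnmn, mul_nonneg hEnn hr.le]
  have hnt : -n ≤ t := (abs_le.mp ht).1
  have hnum : 0 ≤ E * r + g * t := by nlinarith [mul_le_mul_of_nonneg_left hnt hg]
  have heq : E / 2 + g / (2 * r) * t = (E * r + g * t) / (2 * r) := by
    field_simp
  rw [heq]
  exact div_nonneg hnum (by linarith)

set_option maxHeartbeats 1000000 in
theorem post_collision_conservation (p q ω : EuclideanSpace ℝ (Fin 3))
    (hω : ‖ω‖ = 1) (hpq : p + q ≠ 0) :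
    let g := relg p q
    let s := g ^ 2 + 4
    let γt := (en p + en q) / Real.sqrt s
    let w := ω + ((γt - 1) * ⟪p + q, ω⟫ / ‖p + q‖ ^ 2) • (p + q)
    let p' := (1 / 2 : ℝ) • (p + q) + (g / 2) • w
    let q' := (1 / 2 : ℝ) • (p + q) - (g / 2) • w
    let p0' := (en p + en q) / 2 + (g / (2 * Real.sqrt s)) * ⟪p + q, ω⟫
    let q0' := (en p + en q) / 2 - (g / (2 * Real.sqrt s)) * ⟪p + q, ω⟫
    p' + q' = p + q ∧ p0' + q0' = en p + en q ∧ p0' = Real.sqrt (1 + ‖p'‖ ^ 2) := by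
  intro g s γt w p' q' p0' q0'
  -- basic facts
  have hp2 : en p ^ 2 = 1 + ‖p‖ ^ 2 := Real.sq_sqrt (by positivity)
  have hq2 : en q ^ 2 = 1 + ‖q‖ ^ 2 := Real.sq_sqrt (by positivity)
  have hpnn : 0 ≤ en p := Real.sqrt_nonneg _
  have hqnn : 0 ≤ en q := Real.sqrt_nonneg _
  have hp1 : 1 ≤ en p := by nlinarith [sq_nonneg (‖p‖)]
  have hq1 : 1 ≤ en q := by nlinarith [sq_nonneg (‖q‖)]
  have hip : ⟪p, q⟫ ≤ ‖p‖ * ‖q‖ := real_inner_le_norm p q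
  have hprod : (en p * en q) ^ 2 = (1 + ‖p‖ ^ 2) * (1 + ‖q‖ ^ 2) := by
    rw [mul_pow, hp2, hq2]
  have hnn : 0 ≤ 2 * (en p * en q - ⟪p, q⟫ - 1) := by
    nlinarith [sq_nonneg (‖p‖ - ‖q‖), mul_nonneg hpnn hqnn,
      sq_nonneg (en p * en q - 1 - ‖p‖ * ‖q‖), mul_nonneg (mul_nonneg hpnn hqnn) (norm_nonneg p)]
  have hg2 : g ^ 2 = 2 * (en p * en q - ⟪p, q⟫ - 1) := Real.sq_sqrt hnn
  have hgnn : 0 ≤ g := Real.sqrt_nonneg _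
  set E : ℝ := en p + en q with hEdef
  set n : ℝ := ‖p + q‖ with hndef
  set t : ℝ := ⟪p + q, ω⟫ with htdef
  have hn : n ≠ 0 := by simpa [hndef, norm_eq_zero] using hpq
  have hnadd : n ^ 2 = ‖p‖ ^ 2 + 2 * ⟪p, q⟫ + ‖q‖ ^ 2 := by
    simpa using norm_add_sq_real p q
  have hE2 : E ^ 2 = g ^ 2 + 4 + n ^ 2 := by
    rw [hEdef]; nlinarith [hg2, hp2, hq2, hnadd]
  set r : ℝ := Real.sqrt s with hrdef
  have hs4 : (4:ℝ) ≤ s := by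
    show (4:ℝ) ≤ g ^ 2 + 4
    nlinarith [sq_nonneg g]
  have hr : 0 < r := Real.sqrt_pos.mpr (by linarith)
  have hr2 : r ^ 2 = g ^ 2 + 4 := Real.sq_sqrt (by linarith)
  have hγ : γt = E / r := rfl
  have ht : |t| ≤ n := by
    calc |t| ≤ ‖p + q‖ * ‖ω‖ := abs_real_inner_le_norm _ _
    _ = n := by rw [hω, hndef, mul_one]
  -- conservation of momentum
  refine ⟨?_, ?_, ?_⟩
  · show ((1 / 2 : ℝ) • (p + q) + (g / 2) • w) + ((1 / 2 : ℝ) • (p + q) - (g / 2) • w) = p + q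
    module
  · show (E / 2 + (g / (2 * r)) * t) + (E / 2 - (g / (2 * r)) * t) = E
    ring
  · -- energy relation
    set c : ℝ := (γt - 1) * t / n ^ 2 with hcdef
    have hww : ‖w‖ ^ 2 = 1 + 2 * c * t + c ^ 2 * n ^ 2 := by
      show ‖ω + c • (p + q)‖ ^ 2 = _
      rw [norm_add_sq_real, real_inner_smul_right, norm_smul, real_inner_comm, hω]
      try rw [mul_pow, Real.norm_eq_abs, sq_abs, ← hndef, ← htdef]
      try ring
    have huw : ⟪p + q, w⟫ = t + c * n ^ 2 := by
      show ⟪p + q, ω + c • (p + q)⟫ = _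
      rw [inner_add_right, real_inner_smul_right, real_inner_self_eq_norm_sq]
      try rw [← htdef, ← hndef]
    have hp'2 : ‖p'‖ ^ 2 = n ^ 2 / 4 + 2 * ((1 / 2) * (g / 2) * (t + c * n ^ 2)) +
        (g / 2) ^ 2 * (1 + 2 * c * t + c ^ 2 * n ^ 2) := by
      show ‖(1 / 2 : ℝ) • (p + q) + (g / 2) • w‖ ^ 2 = _
      rw [norm_add_sq_real, real_inner_smul_left, real_inner_smul_right, huw,
        norm_smul, norm_smul, mul_pow, mul_pow, hww, Real.norm_eq_abs, Real.norm_eq_abs,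
        sq_abs, sq_abs, ← hndef]
      ring
    have hcn : c * n ^ 2 = (E / r - 1) * t := by
      rw [hcdef, hγ]; field_simp
    have hc : c = (E / r - 1) * t / n ^ 2 := by rw [hcdef, hγ]
    show E / 2 + (g / (2 * r)) * t = Real.sqrt (1 + ‖p'‖ ^ 2)
    rw [hp'2, hcn, hc]
    clear_value g s γt w p' q' p0' q0' E n t r c
    have hE0 : (2:ℝ) ≤ E := by linarith
    rw [key_alg E g t n r hn hr hr2 hE2, Real.sqrt_sq (key_pos E g t n r hgnn hE0 hr hr2 hE2 ht)]
end
end
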